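/- Let h be a generator of a cyclic group of prime order p, and let 0 < i₀ < i₁ < i₂ < i₃ < p be four indices. There exists a 3-element subset Y of {h^{i₀}, h^{i₁}, h^{i₂}, h^{i₃}} with Y ∩ hY = ∅ if and only if it is not the case that both i₁ = i₀ + 1 and i₃ = i₂ + 1. -/
import Mathlib


theorem three_subset_iff {G : Type*} [Group G] [Fintype G] [DecidableEq G]
    (p : ℕ) (hp : p.Prime) (hcard : Fintype.card G = p)
    (h : G) (hgen : ∀ x : G, x ∈ Subgroup.zpowers h)
    (i₀ i₁ i₂ i₃ : ℕ)
    (h0 : 0 < i₀) (h01 : i₀ < i₁) (h12 : i₁ < i₂) (h23 : i₂ < i₃) (h3p : i₃ < p) :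
    (∃ Y : Finset G, Y ⊆ {h ^ i₀, h ^ i₁, h ^ i₂, h ^ i₃} ∧ Y.card = 3 ∧
        ∀ y ∈ Y, h * y ∉ Y) ↔
      ¬(i₁ = i₀ + 1 ∧ i₃ = i₂ + 1) := by
  have htop : Subgroup.zpowers h = ⊤ := by
    rw [eq_top_iff]; intro x _; exact hgen x
  have hord : orderOf h = p := by
    rw [← Nat.card_zpowers, htop, Subgroup.card_top, Nat.card_eq_fintype_card, hcard]
  have hp0 : 0 < p := hp.pos
  have key : ∀ a b : ℕ, a ≤ p → b ≤ p →
      (h ^ a = h ^ b ↔ (a = b ∨ a = 0 ∧ b = p ∨ a = p ∧ b = 0)) := by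
    intro a b ha hb
    rw [pow_eq_pow_iff_modEq, hord]
    have hap : a % p = if a = p then 0 else a := by
      split
      · simp [*, Nat.mod_self]
      · exact Nat.mod_eq_of_lt (lt_of_le_of_ne ha ‹_›)
    have hbp : b % p = if b = p then 0 else b := by
      split
      · simp [*, Nat.mod_self]
      · exact Nat.mod_eq_of_lt (lt_of_le_of_ne hb ‹_›)
    unfold Nat.ModEq
    rw [hap, hbp]
    split <;> split <;> omega
  constructor
  · rintro ⟨Y, hsub, hc3, hY⟩ ⟨e1, e2⟩
    have hsub' : ∀ x ∈ Y, x = h ^ i₀ ∨ x = h ^ i₁ ∨ x = h ^ i₂ ∨ x = h ^ i₃ := by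
      intro x hx
      have := hsub hx
      simpa using this
    have small : ∀ s : Finset G, Y ⊆ s → s.card ≤ 2 → False := by
      intro s hs hsc
      have := Finset.card_le_card hs
      omega
    by_cases ha : h ^ i₀ ∈ Y
    · have hb : h ^ i₁ ∉ Y := by
        have := hY _ ha
        rwa [← pow_succ', ← e1] at this
      by_cases hcc : h ^ i₂ ∈ Y
      · have hd : h ^ i₃ ∉ Y := by
          have := hY _ hcc
          rwa [← pow_succ', ← e2] at this
        refine small {h ^ i₀, h ^ i₂} ?_ (le_trans (Finset.card_insert_le _ _) (by simp))
        intro x hx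
        have := hsub' x hx
        simp only [Finset.mem_insert, Finset.mem_singleton]
        rcases this with rfl|rfl|rfl|rfl <;> tauto
      · refine small {h ^ i₀, h ^ i₃} ?_ (le_trans (Finset.card_insert_le _ _) (by simp))
        intro x hx
        have := hsub' x hx
        simp only [Finset.mem_insert, Finset.mem_singleton]
        rcases this with rfl|rfl|rfl|rfl <;> tauto
    · by_cases hcc : h ^ i₂ ∈ Y
      · have hd : h ^ i₃ ∉ Y := by
          have := hY _ hcc
          rwa [← pow_succ', ← e2] at this
        refine small {h ^ i₁, h ^ i₂} ?_ (le_trans (Finset.card_insert_le _ _) (by simp))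
        intro x hx
        have := hsub' x hx
        simp only [Finset.mem_insert, Finset.mem_singleton]
        rcases this with rfl|rfl|rfl|rfl <;> tauto
      · refine small {h ^ i₁, h ^ i₃} ?_ (le_trans (Finset.card_insert_le _ _) (by simp))
        intro x hx
        have := hsub' x hx
        simp only [Finset.mem_insert, Finset.mem_singleton]
        rcases this with rfl|rfl|rfl|rfl <;> tauto
  · intro hne
    by_cases e1 : i₁ = i₀ + 1
    · have e2 : i₃ ≠ i₂ + 1 := fun hh => hne ⟨e1, hh⟩
      refine ⟨{h ^ i₀, h ^ i₂, h ^ i₃}, ?_, ?_, ?_⟩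
      · intro x hx
        simp only [Finset.mem_insert, Finset.mem_singleton] at hx ⊢
        tauto
      · rw [Finset.card_insert_of_notMem, Finset.card_insert_of_notMem,
          Finset.card_singleton]
        · simp only [Finset.mem_singleton]
          rw [key _ _ (by omega) (by omega)]; omega
        · simp only [Finset.mem_insert, Finset.mem_singleton]
          push_neg
          constructor <;> (rw [Ne, key _ _ (by omega) (by omega)]; omega)
      · intro y hy
        simp only [Finset.mem_insert, Finset.mem_singleton] at hy ⊢
        push_neg
        rcases hy with rfl|rfl|rfl <;> rw [← pow_succ'] <;>
          refine ⟨?_, ?_, ?_⟩ <;> (rw [Ne, key _ _ (by omega) (by omega)]; omega)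
    · refine ⟨{h ^ i₀, h ^ i₁, h ^ i₃}, ?_, ?_, ?_⟩
      · intro x hx
        simp only [Finset.mem_insert, Finset.mem_singleton] at hx ⊢
        tauto
      · rw [Finset.card_insert_of_notMem, Finset.card_insert_of_notMem,
          Finset.card_singleton]
        · simp only [Finset.mem_singleton]
          rw [key _ _ (by omega) (by omega)]; omega
        · simp only [Finset.mem_insert, Finset.mem_singleton]
          push_neg
          constructor <;> (rw [Ne, key _ _ (by omega) (by omega)]; omega)
      · intro y hy
        simp only [Finset.mem_insert, Finset.mem_singleton] at hy ⊢
        push_neg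
        rcases hy with rfl|rfl|rfl <;> rw [← pow_succ'] <;>
          refine ⟨?_, ?_, ?_⟩ <;> (rw [Ne, key _ _ (by omega) (by omega)]; omega)
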